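/- For every positive integer M and every integer f with 1 ≤ f ≤ M-1, ∑_{m=0}^{M-1} (1/2 - m/M + m²/M²)·exp(2πi·f·m/M) = 1/(2M·sin²(π f/M)). -/

import Mathlib

open Complex in
theorem stmt_3 (M : ℕ) (hM : 0 < M) (f : ℕ) (hf1 : 1 ≤ f) (hfM : f ≤ M - 1) :
    ∑ m ∈ Finset.range M,
        (((1 : ℝ) / 2 - (m : ℝ) / M + (m : ℝ) ^ 2 / (M : ℝ) ^ 2 : ℝ) : ℂ) *
          Complex.exp (2 * Real.pi * Complex.I * f * m / M) =
      1 / (2 * (M : ℂ) * (Real.sin (Real.pi * f / M)) ^ 2) := by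
  have hMR : (M : ℝ) ≠ 0 := Nat.cast_ne_zero.mpr hM.ne'
  have hM0 : (M : ℂ) ≠ 0 := Nat.cast_ne_zero.mpr hM.ne'
  have hfltM : f < M := lt_of_le_of_lt hfM (Nat.pred_lt hM.ne')
  set t : ℝ := Real.pi * (f : ℝ) / (M : ℝ) with ht
  have hspos : 0 < Real.sin t := by
    apply Real.sin_pos_of_pos_of_lt_pi
    · have : (0:ℝ) < (f:ℝ) := by exact_mod_cast hf1
      positivity
    · rw [ht, div_lt_iff₀ (by exact_mod_cast hM)]
      have : (f:ℝ) < (M:ℝ) := by exact_mod_cast hfltM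
      nlinarith [Real.pi_pos]
  have hs0 : ((Real.sin t : ℝ) : ℂ) ≠ 0 := by
    exact_mod_cast hspos.ne'
  set x : ℂ := Complex.exp (2 * Real.pi * Complex.I * f / M) with hxdef
  have hx0 : x ≠ 0 := Complex.exp_ne_zero _
  -- x = y^2 with y = exp(t I)
  set y : ℂ := Complex.exp ((t : ℂ) * Complex.I) with hydef
  have hxy : x = y ^ 2 := by
    rw [hxdef, hydef, ← Complex.exp_nat_mul]
    congr 1
    rw [ht]
    field_simp
    push_cast
    field_simp
  have hy : y ^ 2 - 1 = 2 * Complex.I * (Real.sin t : ℂ) * y := by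
    rw [hydef, Complex.exp_mul_I, ← Complex.ofReal_cos, ← Complex.ofReal_sin]
    have h1 : ((Real.sin t : ℝ) : ℂ) ^ 2 + ((Real.cos t : ℝ) : ℂ) ^ 2 = 1 := by
      exact_mod_cast Real.sin_sq_add_cos_sq t
    linear_combination h1 - Complex.I_sq * ((Real.sin t : ℝ) : ℂ)^2
  have hsq : (x - 1) ^ 2 = -4 * x * ((Real.sin t : ℝ) : ℂ) ^ 2 := by
    rw [hxy]
    calc (y^2 - 1)^2 = (2 * Complex.I * (Real.sin t : ℝ) * y)^2 := by rw [hy]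
    _ = -4 * y^2 * ((Real.sin t : ℝ):ℂ)^2 := by
        have := Complex.I_sq
        linear_combination (4 * ((Real.sin t : ℝ):ℂ)^2 * y^2) * this
  have hx1 : x - 1 ≠ 0 := by
    intro h
    have : (0:ℂ) = -4 * x * ((Real.sin t : ℝ) : ℂ) ^ 2 := by
      rw [← hsq, h]; ring
    have hne : -4 * x * ((Real.sin t : ℝ) : ℂ) ^ 2 ≠ 0 := by
      apply mul_ne_zero (mul_ne_zero (by norm_num) hx0) (pow_ne_zero _ hs0)
    exact hne this.symm
  have hxM : x ^ M = 1 := by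
    rw [hxdef, ← Complex.exp_nat_mul]
    have h : (M : ℂ) * (2 * Real.pi * Complex.I * f / M) = (f : ℤ) * (2 * Real.pi * Complex.I) := by
      push_cast
      field_simp
    rw [h, Complex.exp_int_mul_two_pi_mul_I]
  -- closed form for the polynomial-weighted geometric sum
  set γ : ℂ := (M:ℂ)^2*(x-1)^2 - 2*x*(x-1) + 2*(M:ℂ)*x*(x-1) + 4*x^2 with hγ
  have key : ∀ n : ℕ,
      (∑ m ∈ Finset.range n, ((M:ℂ)^2 - 2*(M:ℂ)*(m:ℂ) + 2*(m:ℂ)^2) * x ^ m) * (x-1)^3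
        = x ^ n * (2*(x-1)^2*(n:ℂ)^2 - (2*(M:ℂ)*(x-1)^2 + 4*x*(x-1))*(n:ℂ) + γ) - γ := by
    intro n
    induction n with
    | zero => simp
    | succ n ih =>
      rw [Finset.sum_range_succ, add_mul, ih, pow_succ]
      push_cast
      ring
  set S : ℂ := ∑ m ∈ Finset.range M, ((M:ℂ)^2 - 2*(M:ℂ)*(m:ℂ) + 2*(m:ℂ)^2) * x ^ m with hS
  have hS3 : S * (x-1)^3 = -4*(M:ℂ)*x*(x-1) := by
    rw [hS, key M, hxM]; ring
  have hS2 : S * (x-1)^2 = -4*(M:ℂ)*x := by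
    apply mul_right_cancel₀ hx1
    linear_combination hS3
  -- rewrite LHS in terms of S
  have heq : ∑ m ∈ Finset.range M,
        (((1 : ℝ) / 2 - (m : ℝ) / M + (m : ℝ) ^ 2 / (M : ℝ) ^ 2 : ℝ) : ℂ) *
          Complex.exp (2 * Real.pi * Complex.I * f * m / M)
      = S / (2 * (M:ℂ)^2) := by
    rw [hS, Finset.sum_div]
    apply Finset.sum_congr rfl
    intro m _
    have hexp : Complex.exp (2 * Real.pi * Complex.I * f * m / M) = x ^ m := by
      rw [hxdef, ← Complex.exp_nat_mul]
      congr 1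
      ring
    have hc : (((1:ℝ)/2 - (m:ℝ)/(M:ℝ) + (m:ℝ)^2/(M:ℝ)^2 : ℝ) : ℂ)
        = ((M:ℂ)^2 - 2*(M:ℂ)*(m:ℂ) + 2*(m:ℂ)^2)/(2*(M:ℂ)^2) := by
      push_cast
      field_simp
    rw [hexp, hc]
    ring
  rw [heq]
  have hSs : S * ((Real.sin t : ℝ) : ℂ) ^ 2 = (M:ℂ) := by
    have h4 : S * (-4 * x * ((Real.sin t : ℝ) : ℂ) ^ 2) = -4*(M:ℂ)*x := by
      rw [← hsq]; exact hS2
    have hne : (-4:ℂ) * x ≠ 0 := mul_ne_zero (by norm_num) hx0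
    apply mul_left_cancel₀ hne
    linear_combination h4
  rw [div_eq_div_iff (mul_ne_zero (by norm_num) (pow_ne_zero _ hM0)) (by
    apply mul_ne_zero (mul_ne_zero (by norm_num) hM0) (pow_ne_zero _ hs0))]
  linear_combination (2*(M:ℂ)) * hSs
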